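/- Quarter-power limit from truncated square-root factorizations (Appendix F). For each integer m ≥ 1 let s_m(z) = Σ_{l=0}^{m} (−1)^l · binom(1/2, l) · z^l, where binom(1/2, l) is the generalized binomial coefficient; s_m is a polynomial of degree m with s_m(0) = 1, so it factors as s_m(z) = ∏_{a=1}^{m} (1 − z/w_a^{(m)}), where w_1^{(m)},…,w_m^{(m)} are its complex roots listed with multiplicity. Then for every z ∈ ℂ with |z| < 1, lim_{m→∞} ∏_{a=1}^{m} ∏_{b=1}^{m} ( 1 − z/(w_a^{(m)} · w_b^{(m)}) ) = exp( (1/4)·Log(1 − z) ), where Log is the principal branch of the logarithm. -/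

import Mathlib

open scoped BigOperators
open Filter

noncomputable def halfBinom (l : ℕ) : ℂ :=
  (∏ i ∈ Finset.range l, ((1 : ℂ) / 2 - (i : ℂ))) / (Nat.factorial l : ℂ)

noncomputable def sFun (m : ℕ) (z : ℂ) : ℂ :=
  ∑ l ∈ Finset.range (m + 1), (-1 : ℂ) ^ l * halfBinom l * z ^ l

/-- real version of the signed coefficient `(-1)^l * halfBinom l`. -/
noncomputable def rC (l : ℕ) : ℝ :=
  ((-1 : ℝ) ^ l * ∏ i ∈ Finset.range l, ((1 : ℝ) / 2 - (i : ℝ))) / (Nat.factorial l : ℝ)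

lemma rC_zero : rC 0 = 1 := by simp [rC]

lemma rC_coe (l : ℕ) : ((rC l : ℝ) : ℂ) = (-1 : ℂ) ^ l * halfBinom l := by
  unfold rC halfBinom
  push_cast
  ring

lemma rC_rec (l : ℕ) : 2 * ((l : ℝ) + 1) * rC (l + 1) = (2 * l - 1) * rC l := by
  unfold rC
  rw [Finset.prod_range_succ, Nat.factorial_succ]
  have h1 : (Nat.factorial l : ℝ) ≠ 0 := Nat.cast_ne_zero.mpr (Nat.factorial_ne_zero l)
  have h2 : ((l : ℝ) + 1) ≠ 0 := by positivity
  push_cast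
  field_simp
  ring

lemma rC_neg {l : ℕ} (hl : 1 ≤ l) : rC l < 0 := by
  induction l with
  | zero => omega
  | succ n ih =>
    rcases Nat.eq_or_lt_of_le hl with h | h
    · have : rC 1 = -(1/2) := by
        unfold rC; norm_num
      have hn0 : n = 0 := by omega
      subst hn0
      rw [this]; norm_num
    · have hn : 1 ≤ n := by omega
      have hrn := ih hn
      have hrec := rC_rec n
      have h2 : (0:ℝ) < 2 * ((n : ℝ) + 1) := by positivity
      have h3 : (2 * (n:ℝ) - 1) * rC n < 0 := by
        apply mul_neg_of_pos_of_neg _ hrn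
        have : (1:ℝ) ≤ (n:ℝ) := by exact_mod_cast hn
        linarith
      nlinarith [h3, h2]

lemma rC_sum (m : ℕ) : ∑ l ∈ Finset.range (m + 1), rC l = (1 - 2 * m) * rC m := by
  induction m with
  | zero => simp [rC_zero]
  | succ n ih =>
    rw [Finset.sum_range_succ, ih]
    have hrec := rC_rec n
    push_cast
    nlinarith [hrec]

lemma sFun_eq (m : ℕ) (z : ℂ) :
    sFun m z = ∑ l ∈ Finset.range (m + 1), ((rC l : ℝ) : ℂ) * z ^ l := by
  unfold sFun
  exact Finset.sum_congr rfl fun l _ => by rw [rC_coe]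

lemma rC_tail_lt_one {m : ℕ} (hm : 1 ≤ m) :
    ∑ l ∈ Finset.range m, (-(rC (l + 1))) < 1 := by
  have hs := rC_sum m
  rw [Finset.sum_range_succ'] at hs
  have hpos : 0 < (1 - 2 * (m : ℝ)) * rC m := by
    apply mul_pos_of_neg_of_neg
    · have : (1:ℝ) ≤ (m:ℝ) := by exact_mod_cast hm
      linarith
    · exact rC_neg hm
  have : ∑ l ∈ Finset.range m, (-(rC (l + 1))) = 1 - (1 - 2 * (m:ℝ)) * rC m := by
    rw [Finset.sum_neg_distrib]
    rw [rC_zero] at hs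
    linarith
  rw [this]; linarith

lemma sFun_lower {m : ℕ} (hm : 1 ≤ m) {u : ℂ} (hu : ‖u‖ ≤ 1) :
    ‖sFun m u - 1‖ < 1 := by
  have h1 : sFun m u - 1 = ∑ l ∈ Finset.range m, ((rC (l+1) : ℝ) : ℂ) * u ^ (l+1) := by
    rw [sFun_eq, Finset.sum_range_succ']
    simp [rC_zero]
  rw [h1]
  calc ‖∑ l ∈ Finset.range m, ((rC (l+1) : ℝ) : ℂ) * u ^ (l+1)‖
      ≤ ∑ l ∈ Finset.range m, ‖((rC (l+1) : ℝ) : ℂ) * u ^ (l+1)‖ := norm_sum_le _ _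
    _ ≤ ∑ l ∈ Finset.range m, (-(rC (l + 1))) := by
        apply Finset.sum_le_sum
        intro l _
        rw [norm_mul, Complex.norm_real, norm_pow]
        have h2 : |rC (l+1)| = -(rC (l+1)) := abs_of_neg (rC_neg (by omega))
        rw [Real.norm_eq_abs, h2]
        have h3 : ‖u‖ ^ (l+1) ≤ 1 := pow_le_one₀ (norm_nonneg u) hu
        nlinarith [abs_nonneg (rC (l+1)), h2, rC_neg (show 1 ≤ l+1 by omega)]
    _ < 1 := rC_tail_lt_one hm

lemma sFun_ne_zero {m : ℕ} (hm : 1 ≤ m) {u : ℂ} (hu : ‖u‖ ≤ 1) :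
    sFun m u ≠ 0 := by
  intro h0
  have := sFun_lower hm hu
  rw [h0] at this
  simp at this

noncomputable def Ps (m : ℕ) : Polynomial ℂ :=
  ∑ l ∈ Finset.range (m + 1), Polynomial.C ((rC l : ℝ) : ℂ) * Polynomial.X ^ l

lemma Ps_eval (m : ℕ) (z : ℂ) : (Ps m).eval z = sFun m z := by
  rw [sFun_eq]
  simp only [Ps, Polynomial.eval_finset_sum, Polynomial.eval_mul, Polynomial.eval_C,
    Polynomial.eval_pow, Polynomial.eval_X]

lemma Ps_coeff (m k : ℕ) : (Ps m).coeff k = if k ≤ m then ((rC k : ℝ) : ℂ) else 0 := by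
  simp only [Ps, Polynomial.finset_sum_coeff, Polynomial.coeff_C_mul, Polynomial.coeff_X_pow,
    mul_ite, mul_one, mul_zero]
  rw [Finset.sum_ite_eq (Finset.range (m+1)) k fun l => ((rC l : ℝ) : ℂ)]
  simp [Nat.lt_succ_iff]

section Roots

variable {m : ℕ} {w : Fin m → ℂ}

lemma Ps_eq_prod (hw : ∀ z : ℂ, sFun m z = ∏ a, (1 - z / w a)) :
    Ps m = ∏ a, (1 - Polynomial.C (w a)⁻¹ * Polynomial.X) := by
  apply Polynomial.funext
  intro z
  rw [Ps_eval, hw, Polynomial.eval_prod]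
  apply Finset.prod_congr rfl
  intro a _
  rw [Polynomial.eval_sub, Polynomial.eval_one, Polynomial.eval_mul, Polynomial.eval_C,
    Polynomial.eval_X, div_eq_mul_inv, mul_comm]

lemma w_ne_zero (hm : 1 ≤ m) (hw : ∀ z : ℂ, sFun m z = ∏ a, (1 - z / w a)) (a : Fin m) :
    w a ≠ 0 := by
  intro ha
  have hfac : (1 - Polynomial.C (w a)⁻¹ * Polynomial.X : Polynomial ℂ) = 1 := by
    rw [ha]; simp
  have hdeg : (∏ b, (1 - Polynomial.C (w b)⁻¹ * Polynomial.X) : Polynomial ℂ).natDegree < m := by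
    refine lt_of_le_of_lt (Polynomial.natDegree_prod_le _ _) ?_
    rw [← Finset.add_sum_erase _ _ (Finset.mem_univ a), hfac]
    simp only [Polynomial.natDegree_one, zero_add]
    calc ∑ b ∈ Finset.univ.erase a,
          (1 - Polynomial.C (w b)⁻¹ * Polynomial.X : Polynomial ℂ).natDegree
        ≤ ∑ _b ∈ Finset.univ.erase a, 1 := by
          apply Finset.sum_le_sum
          intro b _
          refine le_trans (Polynomial.natDegree_sub_le _ _) ?_
          simp [Polynomial.natDegree_one]
          exact le_trans (Polynomial.natDegree_C_mul_le _ _) (by simp)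
      _ = Finset.card (Finset.univ.erase a) := by simp
      _ < m := by
          rw [Finset.card_erase_of_mem (Finset.mem_univ a)]
          simp
          omega
  have h0 : (Ps m).coeff m ≠ 0 := by
    rw [Ps_coeff]
    simp only [le_refl, if_true]
    exact_mod_cast ne_of_lt (rC_neg hm)
  rw [Ps_eq_prod hw] at h0
  exact h0 (Polynomial.coeff_eq_zero_of_natDegree_lt hdeg)

lemma w_norm (hm : 1 ≤ m) (hw : ∀ z : ℂ, sFun m z = ∏ a, (1 - z / w a)) (a : Fin m) :
    1 ≤ ‖w a‖ := by
  by_contra hlt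
  push_neg at hlt
  have hr : sFun m (w a) = 0 := by
    rw [hw]
    exact Finset.prod_eq_zero (Finset.mem_univ a)
      (by rw [div_self (w_ne_zero hm hw a)]; ring)
  exact sFun_ne_zero hm (le_of_lt hlt) hr

end Roots

lemma geom_inv (v : ℂ) :
    (1 - PowerSeries.C v * PowerSeries.X) * PowerSeries.mk (fun k => v ^ k) = 1 := by
  ext n
  rw [sub_mul, one_mul, map_sub]
  cases n with
  | zero => simp
  | succ n =>
    rw [mul_assoc, PowerSeries.coeff_C_mul, PowerSeries.coeff_succ_X_mul, PowerSeries.coeff_mk,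
      PowerSeries.coeff_mk, pow_succ]
    simp [mul_comm]

lemma deriv_prod_eq {ι : Type*} [DecidableEq ι] (v : ι → ℂ) (T : Finset ι) :
    ((Polynomial.derivative (∏ a ∈ T, (1 - Polynomial.C (v a) * Polynomial.X)) :
        Polynomial ℂ) : PowerSeries ℂ)
      = -(∑ a ∈ T, PowerSeries.C (v a) * PowerSeries.mk fun k => (v a) ^ k) *
        ((∏ a ∈ T, (1 - Polynomial.C (v a) * Polynomial.X) : Polynomial ℂ) : PowerSeries ℂ) := by
  induction T using Finset.induction_on with
  | empty => simp
  | insert a T ha ih =>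
    rw [Finset.prod_insert ha, Finset.sum_insert ha]
    rw [Polynomial.derivative_mul]
    have hd1 : Polynomial.derivative (1 - Polynomial.C (v a) * Polynomial.X)
        = Polynomial.C (-(v a)) := by
      simp [Polynomial.derivative_sub]
    rw [hd1]
    push_cast [Polynomial.coe_mul, Polynomial.coe_add, Polynomial.coe_C, Polynomial.coe_sub,
      Polynomial.coe_one, Polynomial.coe_X]
    rw [ih]
    have hg := geom_inv (v a)
    rw [map_neg]
    linear_combination ((PowerSeries.C (v a)) *
      ((∏ a ∈ T, (1 - Polynomial.C (v a) * Polynomial.X) : Polynomial ℂ) : PowerSeries ℂ)) * hg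

lemma cRec (l : ℕ) :
    2 * ((l : ℂ) + 1) * ((rC (l+1) : ℝ) : ℂ) = (2 * (l : ℂ) - 1) * ((rC l : ℝ) : ℂ) := by
  have := rC_rec l
  push_cast
  exact_mod_cast congrArg (fun x : ℝ => (x : ℂ)) this

lemma ode (m : ℕ) (hm : 1 ≤ m) :
    Polynomial.C (2:ℂ) * Polynomial.derivative (Ps m)
      - Polynomial.C (2:ℂ) * (Polynomial.X * Polynomial.derivative (Ps m)) + Ps m
    = Polynomial.C ((1 - 2*(m:ℂ)) * ((rC m : ℝ) : ℂ)) * Polynomial.X ^ m := by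
  apply Polynomial.ext
  intro k
  rw [Polynomial.coeff_add, Polynomial.coeff_sub, Polynomial.coeff_C_mul, Polynomial.coeff_C_mul,
    Polynomial.coeff_C_mul_X_pow, Polynomial.coeff_derivative, Ps_coeff]
  cases k with
  | zero =>
    rw [Polynomial.mul_coeff_zero, Polynomial.coeff_X, if_neg one_ne_zero, zero_mul, mul_zero]
    have h1 := cRec 0
    rw [Ps_coeff]
    have h0 : (0:ℕ) ≤ m := Nat.zero_le m
    have h1m : 1 ≤ m := hm
    simp only [if_pos h1m, if_pos h0, rC_zero]
    push_cast
    have : ((rC 1 : ℝ) : ℂ) = -(1/2) := by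
      have : rC 1 = -(1/2) := by unfold rC; norm_num
      rw [this]; push_cast; ring
    rw [this]
    have hmne : m ≠ 0 := by omega
    rw [if_neg (fun h : (0:ℕ) = m => hmne h.symm)]
    push_cast
    ring
  | succ k =>
    rw [Polynomial.coeff_X_mul, Polynomial.coeff_derivative, Ps_coeff]
    rcases lt_trichotomy (k+1) m with hlt | heq | hgt
    · have h2 : k + 1 + 1 ≤ m := by omega
      have h3 : k + 1 ≤ m := by omega
      have h4 : k + 1 ≠ m := by omega
      rw [if_pos h2, if_pos h3, if_neg h4]
      have hrec := cRec (k+1)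
      push_cast at hrec ⊢
      linear_combination hrec
    · have h2 : ¬ (k + 1 + 1 ≤ m) := by omega
      have h3 : k + 1 ≤ m := by omega
      rw [if_pos h3, if_neg h2, if_pos heq]
      rw [← heq]
      push_cast
      ring
    · have h2 : ¬ (k + 1 + 1 ≤ m) := by omega
      have h3 : ¬ (k + 1 ≤ m) := by omega
      have h4 : k + 1 ≠ m := by omega
      rw [if_neg h2, if_neg h3, if_neg h4]
      ring

section PK

variable {m : ℕ} {w : Fin m → ℂ}

lemma pk_half (hm : 1 ≤ m) (hw : ∀ z : ℂ, sFun m z = ∏ a, (1 - z / w a)) :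
    ∀ k, 1 ≤ k → k ≤ m → (∑ a, ((w a)⁻¹) ^ k) = (1/2 : ℂ) := by
  have hprod := Ps_eq_prod hw
  have hDF : ((Polynomial.derivative (Ps m) : Polynomial ℂ) : PowerSeries ℂ)
      = -(∑ a, PowerSeries.C ((w a)⁻¹) * PowerSeries.mk fun k => ((w a)⁻¹) ^ k) *
        ((Ps m : Polynomial ℂ) : PowerSeries ℂ) := by
    conv_lhs => rw [hprod]
    conv_rhs => rw [hprod]
    exact deriv_prod_eq (fun a => (w a)⁻¹) Finset.univ
  have hODE := congrArg (fun p : Polynomial ℂ => (p : PowerSeries ℂ)) (ode m hm)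
  simp only [Polynomial.coe_add, Polynomial.coe_sub, Polynomial.coe_mul, Polynomial.coe_C,
    Polynomial.coe_X, Polynomial.coe_pow] at hODE
  set F : PowerSeries ℂ :=
    ∑ a, PowerSeries.C ((w a)⁻¹) * PowerSeries.mk fun k => ((w a)⁻¹) ^ k with hF
  set S : PowerSeries ℂ := ((Ps m : Polynomial ℂ) : PowerSeries ℂ) with hS
  set G : PowerSeries ℂ :=
    1 - PowerSeries.C 2 * F + PowerSeries.C 2 * (PowerSeries.X * F) with hG
  have hSG : S * G = PowerSeries.C ((1 - 2*(m:ℂ)) * ((rC m : ℝ) : ℂ)) * PowerSeries.X ^ m := by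
    rw [← hODE, hDF, hG]
    ring
  have hUnit : IsUnit S := by
    rw [PowerSeries.isUnit_iff_constantCoeff]
    have : PowerSeries.constantCoeff S = 1 := by
      rw [hS, Polynomial.constantCoeff_coe, Ps_coeff]
      simp [rC_zero]
    rw [this]
    exact isUnit_one
  have hdvd : (PowerSeries.X : PowerSeries ℂ) ^ m ∣ G := by
    obtain ⟨u, hu⟩ := hUnit
    have h1 : (PowerSeries.X : PowerSeries ℂ) ^ m ∣ S * G := by
      rw [hSG]; exact dvd_mul_left _ _
    have h2 : (↑u⁻¹ : PowerSeries ℂ) * (S * G) = G := by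
      rw [← hu, ← mul_assoc, Units.inv_mul, one_mul]
    exact h2 ▸ h1.mul_left _
  have hcoeff : ∀ k, k < m → PowerSeries.coeff k G = 0 :=
    PowerSeries.X_pow_dvd_iff.mp hdvd
  have hFc : ∀ k, PowerSeries.coeff k F = ∑ a, ((w a)⁻¹) ^ (k+1) := by
    intro k
    rw [hF, map_sum]
    apply Finset.sum_congr rfl
    intro a _
    rw [PowerSeries.coeff_C_mul, PowerSeries.coeff_mk, pow_succ]
    ring
  have hG0 : PowerSeries.coeff 0 G = 1 - 2 * (∑ a, ((w a)⁻¹) ^ 1) := by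
    rw [hG, map_add, map_sub, PowerSeries.coeff_C_mul, PowerSeries.coeff_C_mul,
      PowerSeries.coeff_zero_X_mul, PowerSeries.coeff_zero_one, hFc]
    simp
  have hGk : ∀ k, PowerSeries.coeff (k+1) G
      = -2 * (∑ a, ((w a)⁻¹) ^ (k+2)) + 2 * (∑ a, ((w a)⁻¹) ^ (k+1)) := by
    intro k
    rw [hG, map_add, map_sub, PowerSeries.coeff_C_mul, PowerSeries.coeff_C_mul,
      PowerSeries.coeff_succ_X_mul, hFc, hFc, PowerSeries.coeff_one]
    simp only [Nat.succ_ne_zero, if_false]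
    ring
  intro k hk1
  induction k, hk1 using Nat.le_induction with
  | base =>
    intro hkm
    have h0 := hcoeff 0 (by omega)
    rw [hG0] at h0
    linear_combination -h0 / 2
  | succ n hn ih =>
    intro hkm
    obtain ⟨j, rfl⟩ : ∃ j, n = j + 1 := ⟨n - 1, by omega⟩
    have h0 := hcoeff (j+1) (by omega)
    rw [hGk j] at h0
    have hih := ih (by omega)
    rw [hih] at h0
    have hidx : j + 1 + 1 = j + 2 := rfl
    rw [hidx]
    linear_combination -h0 / 2

end PK

section Analytic

variable {m : ℕ} {w : Fin m → ℂ} {z : ℂ}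

lemma zeta_norm_lt (hm : 1 ≤ m) (hw : ∀ z : ℂ, sFun m z = ∏ a, (1 - z / w a))
    (hz : ‖z‖ < 1) (a b : Fin m) : ‖z / (w a * w b)‖ < 1 := by
  have ha := w_norm hm hw a
  have hb := w_norm hm hw b
  rw [norm_div, norm_mul]
  have h1 : (1:ℝ) ≤ ‖w a‖ * ‖w b‖ := by nlinarith
  have h2 : ‖z‖ / (‖w a‖ * ‖w b‖) ≤ ‖z‖ := by
    apply div_le_self (norm_nonneg z) h1
  linarith

lemma per_m_hasSum (hm : 1 ≤ m) (hw : ∀ z : ℂ, sFun m z = ∏ a, (1 - z / w a))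
    (hz : ‖z‖ < 1) :
    HasSum (fun n : ℕ => (∑ a, ((w a)⁻¹) ^ n) ^ 2 * (z ^ n / (n : ℂ)))
      (∑ a, ∑ b, -Complex.log (1 - z / (w a * w b))) := by
  have h1 : ∀ p : Fin m × Fin m,
      HasSum (fun n : ℕ => (z / (w p.1 * w p.2)) ^ n / (n : ℂ))
        (-Complex.log (1 - z / (w p.1 * w p.2))) :=
    fun p => Complex.hasSum_taylorSeries_neg_log (zeta_norm_lt hm hw hz p.1 p.2)
  have h2 := hasSum_sum (f := fun (p : Fin m × Fin m) (n : ℕ) =>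
      (z / (w p.1 * w p.2)) ^ n / (n : ℂ))
    (s := Finset.univ) (fun p _ => h1 p)
  have key : ∀ n : ℕ,
      (∑ p : Fin m × Fin m, (z / (w p.1 * w p.2)) ^ n / (n : ℂ))
        = (∑ a, ((w a)⁻¹) ^ n) ^ 2 * (z ^ n / (n : ℂ)) := by
    intro n
    rw [Fintype.sum_prod_type]
    have hterm : ∀ a b : Fin m, (z / (w a * w b)) ^ n / (n : ℂ)
        = (((w a)⁻¹) ^ n * ((w b)⁻¹) ^ n) * (z ^ n / (n : ℂ)) := by
      intro a b
      have e : z / (w a * w b) = z * (w a)⁻¹ * (w b)⁻¹ := by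
        rw [div_eq_mul_inv, mul_inv]; ring
      rw [e, mul_pow, mul_pow]
      ring
    simp_rw [hterm]
    rw [sq, Finset.sum_mul_sum]
    rw [Finset.sum_mul]
    apply Finset.sum_congr rfl
    intro a _
    rw [Finset.sum_mul]
  have hsum_eq : (∑ p : Fin m × Fin m, -Complex.log (1 - z / (w p.1 * w p.2)))
      = ∑ a, ∑ b, -Complex.log (1 - z / (w a * w b)) := Fintype.sum_prod_type _
  rw [← hsum_eq]
  exact (funext key : _ = _) ▸ h2

lemma per_m_prod (hm : 1 ≤ m) (hw : ∀ z : ℂ, sFun m z = ∏ a, (1 - z / w a))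
    (hz : ‖z‖ < 1) :
    (∏ a, ∏ b, (1 - z / (w a * w b)))
      = Complex.exp (-(∑ a, ∑ b, -Complex.log (1 - z / (w a * w b)))) := by
  have hne : ∀ a b : Fin m, (1 - z / (w a * w b)) ≠ 0 := by
    intro a b h
    have h1 := zeta_norm_lt hm hw hz a b
    have h2 : z / (w a * w b) = 1 := by linear_combination -h
    rw [h2] at h1
    simp at h1
  have : ∀ a b : Fin m, (1 - z / (w a * w b))
      = Complex.exp (Complex.log (1 - z / (w a * w b))) :=
    fun a b => (Complex.exp_log (hne a b)).symm
  calc (∏ a, ∏ b, (1 - z / (w a * w b)))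
      = ∏ a, ∏ b, Complex.exp (Complex.log (1 - z / (w a * w b))) := by
        apply Finset.prod_congr rfl
        intro a _
        exact Finset.prod_congr rfl fun b _ => this a b
    _ = Complex.exp (∑ a, ∑ b, Complex.log (1 - z / (w a * w b))) := by
        rw [Complex.exp_sum]
        apply Finset.prod_congr rfl
        intro a _
        rw [Complex.exp_sum]
    _ = Complex.exp (-(∑ a, ∑ b, -Complex.log (1 - z / (w a * w b)))) := by
        congr 1
        simp

end Analytic

section Bound

variable {m : ℕ} {w : Fin m → ℂ} {z : ℂ}

lemma per_m_bound (hm : 1 ≤ m) (hw : ∀ z : ℂ, sFun m z = ∏ a, (1 - z / w a))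
    (hz : ‖z‖ < 1) :
    ‖(∑' n : ℕ, (∑ a, ((w a)⁻¹) ^ n) ^ 2 * (z ^ n / (n : ℂ)))
        - (1/4 : ℂ) * -Complex.log (1 - z)‖
      ≤ ((m:ℝ)^2 + 1) * ‖z‖^(m+1) * (1 - ‖z‖)⁻¹ := by
  have hq := per_m_hasSum hm hw hz
  have hbase := (Complex.hasSum_taylorSeries_neg_log hz).mul_left (1/4 : ℂ)
  set d : ℕ → ℂ := fun n =>
    (∑ a, ((w a)⁻¹) ^ n) ^ 2 * (z ^ n / (n : ℂ)) - (1/4 : ℂ) * (z ^ n / (n : ℂ)) with hd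
  have hds : HasSum d ((∑ a, ∑ b, -Complex.log (1 - z / (w a * w b)))
      - (1/4 : ℂ) * -Complex.log (1 - z)) := hq.sub hbase
  have h1 : (∑' n : ℕ, (∑ a, ((w a)⁻¹) ^ n) ^ 2 * (z ^ n / (n : ℂ)))
      - (1/4 : ℂ) * -Complex.log (1 - z) = ∑' n, d n := by
    rw [hq.tsum_eq, hds.tsum_eq]
  rw [h1]
  have hzero : ∀ n ∈ Finset.range (m+1), d n = 0 := by
    intro n hn
    rcases Nat.eq_zero_or_pos n with rfl | hpos
    · simp [hd]
    · have hph := pk_half hm hw n hpos (by rw [Finset.mem_range] at hn; omega)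
      simp only [hd]
      rw [hph]
      ring
  rw [← Summable.sum_add_tsum_nat_add (m+1) hds.summable, Finset.sum_eq_zero hzero, zero_add]
  have hvb : ∀ (a : Fin m) (j : ℕ), ‖((w a)⁻¹) ^ j‖ ≤ 1 := by
    intro a j
    rw [norm_pow, norm_inv]
    apply pow_le_one₀ (by positivity)
    have h1 := w_norm hm hw a
    have h2 : (0:ℝ) < ‖w a‖ := by linarith
    rw [inv_le_one_iff₀]
    right; exact h1
  have hPb : ∀ j, ‖∑ a, ((w a)⁻¹) ^ j‖ ≤ (m:ℝ) := by
    intro j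
    calc ‖∑ a, ((w a)⁻¹) ^ j‖ ≤ ∑ a, ‖((w a)⁻¹) ^ j‖ := norm_sum_le _ _
      _ ≤ ∑ _a : Fin m, (1:ℝ) := Finset.sum_le_sum fun a _ => hvb a j
      _ = m := by simp
  have hdb : ∀ n : ℕ, ‖d (n + (m+1))‖ ≤ ((m:ℝ)^2 + 1) * ‖z‖^(m+1) * ‖z‖^n := by
    intro n
    have hj1 : 1 ≤ n + (m+1) := by omega
    have htj : ‖z ^ (n + (m+1)) / ((n + (m+1) : ℕ) : ℂ)‖ ≤ ‖z‖ ^ (n + (m+1)) := by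
      rw [norm_div, norm_pow, Complex.norm_natCast]
      apply div_le_self (by positivity)
      exact_mod_cast hj1
    have hP := hPb (n + (m+1))
    have hPnn : (0:ℝ) ≤ ‖∑ a, ((w a)⁻¹) ^ (n + (m+1))‖ := norm_nonneg _
    calc ‖d (n + (m+1))‖
        ≤ ‖(∑ a, ((w a)⁻¹) ^ (n + (m+1))) ^ 2 * (z ^ (n + (m+1)) / ((n + (m+1) : ℕ) : ℂ))‖
          + ‖(1/4 : ℂ) * (z ^ (n + (m+1)) / ((n + (m+1) : ℕ) : ℂ))‖ := norm_sub_le _ _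
      _ ≤ (m:ℝ)^2 * ‖z‖^(n + (m+1)) + (1/4) * ‖z‖^(n + (m+1)) := by
          apply add_le_add
          · rw [norm_mul, norm_pow]
            have hm0 : (0:ℝ) ≤ (m:ℝ) := Nat.cast_nonneg m
            gcongr
          · rw [norm_mul]
            have : ‖(1/4 : ℂ)‖ = 1/4 := by norm_num
            rw [this]
            gcongr
      _ ≤ ((m:ℝ)^2 + 1) * ‖z‖^(n + (m+1)) := by
          nlinarith [pow_nonneg (norm_nonneg z) (n + (m+1))]
      _ = ((m:ℝ)^2 + 1) * ‖z‖^(m+1) * ‖z‖^n := by rw [pow_add]; ring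
  have hsumb : Summable (fun n : ℕ => ((m:ℝ)^2 + 1) * ‖z‖^(m+1) * ‖z‖^n) :=
    (summable_geometric_of_lt_one (norm_nonneg z) hz).mul_left _
  have hsumd : Summable (fun n => ‖d (n + (m+1))‖) :=
    hsumb.of_nonneg_of_le (fun n => norm_nonneg _) hdb
  calc ‖∑' n, d (n + (m+1))‖ ≤ ∑' n, ‖d (n + (m+1))‖ := norm_tsum_le_tsum_norm hsumd
    _ ≤ ∑' n : ℕ, ((m:ℝ)^2 + 1) * ‖z‖^(m+1) * ‖z‖^n := Summable.tsum_le_tsum hdb hsumd hsumb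
    _ = ((m:ℝ)^2 + 1) * ‖z‖^(m+1) * (1 - ‖z‖)⁻¹ := by
        rw [tsum_mul_left, tsum_geometric_of_lt_one (norm_nonneg z) hz]

end Bound

/-- Appendix F: quarter-power limit from truncated square-root factorizations.  If
`w^{(m)}` lists the roots of `s_m` (so that `s_m(z) = ∏_a (1 − z/w_a^{(m)})`), then for
`|z| < 1` the double products `∏_{a,b} (1 − z/(w_a^{(m)} w_b^{(m)}))` converge to
`(1−z)^{1/4} = exp(¼ Log(1−z))`. -/
theorem quarter_power_limit
    (w : (m : ℕ) → Fin m → ℂ)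
    (hw : ∀ m : ℕ, 1 ≤ m → ∀ z : ℂ, sFun m z = ∏ a, (1 - z / w m a))
    (z : ℂ) (hz : ‖z‖ < 1) :
    Tendsto
      (fun m : ℕ => ∏ a : Fin m, ∏ b : Fin m, (1 - z / (w m a * w m b)))
      atTop
      (nhds (Complex.exp ((1 / 4) * Complex.log (1 - z)))) := by
  have h0z : (0:ℝ) ≤ ‖z‖ := norm_nonneg z
  set L : ℂ := (1/4 : ℂ) * -Complex.log (1 - z) with hL
  set Q : ℕ → ℂ :=
    fun m => ∑' n : ℕ, (∑ a : Fin m, ((w m a)⁻¹) ^ n) ^ 2 * (z ^ n / (n : ℂ)) with hQ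
  have hTQ : Tendsto Q atTop (nhds L) := by
    rw [← tendsto_sub_nhds_zero_iff]
    apply squeeze_zero_norm' (a := fun m : ℕ => ((m:ℝ)^2 + 1) * ‖z‖^(m+1) * (1 - ‖z‖)⁻¹)
    · filter_upwards [eventually_ge_atTop 1] with m hm
      exact per_m_bound hm (hw m hm) hz
    · have h2 := (tendsto_pow_const_mul_const_pow_of_lt_one 2 h0z hz).add
        (tendsto_pow_atTop_nhds_zero_of_lt_one h0z hz)
      have h3 := h2.mul_const (‖z‖ * (1 - ‖z‖)⁻¹)
      simp only [add_zero, zero_mul] at h3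
      apply h3.congr
      intro m
      rw [pow_succ]
      ring
  have hexp : Tendsto (fun m => Complex.exp (-(Q m))) atTop (nhds (Complex.exp (-L))) :=
    (Complex.continuous_exp.tendsto _).comp hTQ.neg
  have hpt : Complex.exp (-L) = Complex.exp ((1/4 : ℂ) * Complex.log (1 - z)) := by
    congr 1
    rw [hL]
    ring
  rw [hpt] at hexp
  apply Tendsto.congr' _ hexp
  filter_upwards [eventually_ge_atTop 1] with m hm
  have hps := per_m_prod hm (hw m hm) hz
  have hqs := per_m_hasSum hm (hw m hm) hz
  rw [hps, hQ]
  simp only []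
  rw [hqs.tsum_eq]
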